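/- Fix q₀ ∈ Proj*(H) and a norm-continuous map g: Proj*(H) → U(H) such that q = g(q) q₀ g(q)* for every q ∈ Proj*(H). Let T₀ be the group of unitaries of H commuting with q₀, equipped with the strong operator topology, and let T be the set U(H) with the topology induced by the injection u ↦ (u, u q₀ u*) into sU(H) × Proj*(H) (Proj*(H) with the norm topology). Then the map T₀ × Proj*(H) → T, (v, q) ↦ g(q)·v, is a homeomorphism. -/

import Mathlib

open scoped InnerProductSpace Classical
noncomputable section

namespace Paper

variable {H : Type*} [NormedAddCommGroup H] [InnerProductSpace ℂ H] [CompleteSpace H]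

/-- An orthogonal projection of infinite rank and infinite corank (a polarization). -/
def IsProjInfInf (p : H →L[ℂ] H) : Prop :=
  IsIdempotentElem p ∧ IsSelfAdjoint p ∧
  ¬ FiniteDimensional ℂ (LinearMap.range (p : H →ₗ[ℂ] H)) ∧ ¬ FiniteDimensional ℂ (LinearMap.ker (p : H →ₗ[ℂ] H))

/-- `Proj*(H)`: the projections of infinite rank and corank, with the norm topology. -/
def ProjStar (H : Type*) [NormedAddCommGroup H] [InnerProductSpace ℂ H] [CompleteSpace H] :
    Type _ := {p : H →L[ℂ] H // IsProjInfInf p}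

instance : TopologicalSpace (ProjStar H) := instTopologicalSpaceSubtype

/-- The space `T`: the unitary group of `H` with the topology induced by the injection
`u ↦ (u, u q₀ u⁎)` into `sU(H) × Proj*(H)` (strong operator topology on the first factor,
norm topology on the second). -/
def Tspace (q₀ : H →L[ℂ] H) : Type _ := unitary (H →L[ℂ] H)

instance (q₀ : H →L[ℂ] H) : TopologicalSpace (Tspace q₀) :=
  TopologicalSpace.induced
    (fun u : unitary (H →L[ℂ] H) =>
      ((⇑(u : H →L[ℂ] H) : H → H),
        ((u : H →L[ℂ] H) * q₀ * star (u : H →L[ℂ] H) : H →L[ℂ] H)))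
    inferInstance

/-- Pack a unitary as an element of `Tspace q₀`. -/
def Tspace.of (q₀ : H →L[ℂ] H) (u : H →L[ℂ] H) (h : u ∈ unitary (H →L[ℂ] H)) :
    Tspace q₀ := ⟨u, h⟩

/-- `T₀`: the subgroup of unitaries commuting with `q₀`, with the strong operator topology. -/
def T0 (q₀ : H →L[ℂ] H) : Type _ :=
  {v : unitary (H →L[ℂ] H) // (v : H →L[ℂ] H) * q₀ = q₀ * (v : H →L[ℂ] H)}

instance (q₀ : H →L[ℂ] H) : TopologicalSpace (T0 q₀) :=
  TopologicalSpace.induced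
    (fun v : {v : unitary (H →L[ℂ] H) // (v : H →L[ℂ] H) * q₀ = q₀ * (v : H →L[ℂ] H)} =>
      (⇑((v.1 : unitary (H →L[ℂ] H)) : H →L[ℂ] H) : H → H))
    Pi.topologicalSpace

/-!
STATEMENT 13: Fix `q₀ ∈ Proj*(H)` and a norm continuous map `g : Proj*(H) → U(H)` with
`q = g(q) q₀ g(q)⁎` for all `q`.  Then the map `T₀ × Proj*(H) → T`, `(v, q) ↦ g(q)·v`, is a
homeomorphism.
-/
lemma lcancel {A : H →L[ℂ] H} (h : star A * A = 1) (x : H →L[ℂ] H) :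
    star A * (A * x) = x := by rw [← mul_assoc, h, one_mul]

lemma lcancel' {A : H →L[ℂ] H} (h : A * star A = 1) (x : H →L[ℂ] H) :
    A * (star A * x) = x := by rw [← mul_assoc, h, one_mul]

lemma apply_star_apply {A : H →L[ℂ] H} (h : star A * A = 1) (x : H) :
    star A (A x) = x := by
  have := congrArg (fun f : H →L[ℂ] H => f x) h
  simpa [ContinuousLinearMap.mul_apply] using this

lemma range_conj (u p : H →L[ℂ] H) (hu : u ∈ unitary (H →L[ℂ] H)) :
    LinearMap.range ((u * p * star u : H →L[ℂ] H) : H →ₗ[ℂ] H) = (LinearMap.range (p : H →ₗ[ℂ] H)).map (u : H →ₗ[ℂ] H) := by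
  ext x
  simp only [LinearMap.mem_range, Submodule.mem_map, ContinuousLinearMap.coe_coe]
  constructor
  · rintro ⟨y, rfl⟩
    exact ⟨p (star u y), ⟨star u y, rfl⟩, by
      simp [ContinuousLinearMap.mul_apply]⟩
  · rintro ⟨z, ⟨w, rfl⟩, rfl⟩
    exact ⟨u w, by simp [ContinuousLinearMap.mul_apply, apply_star_apply hu.1]⟩

lemma ker_conj (u p : H →L[ℂ] H) (hu : u ∈ unitary (H →L[ℂ] H)) :
    LinearMap.ker ((u * p * star u : H →L[ℂ] H) : H →ₗ[ℂ] H) = (LinearMap.ker (p : H →ₗ[ℂ] H)).map (u : H →ₗ[ℂ] H) := by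
  have hinj : Function.Injective u := by
    intro a b hab
    have := congrArg (⇑(star u)) hab
    simpa [apply_star_apply hu.1] using this
  ext x
  simp only [LinearMap.mem_ker, Submodule.mem_map, ContinuousLinearMap.coe_coe]
  constructor
  · intro hx
    refine ⟨star u x, ?_, ?_⟩
    · have : u (p (star u x)) = u 0 := by
        simpa [ContinuousLinearMap.mul_apply] using hx
      exact hinj this
    · have := congrArg (fun f : H →L[ℂ] H => f x) hu.2
      simpa [ContinuousLinearMap.mul_apply] using this
  · rintro ⟨w, hw, rfl⟩
    simp [ContinuousLinearMap.mul_apply, apply_star_apply hu.1, hw]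

lemma not_fd_map (u : H →L[ℂ] H) (hu : u ∈ unitary (H →L[ℂ] H)) (S : Submodule ℂ H)
    (h : ¬ FiniteDimensional ℂ S) : ¬ FiniteDimensional ℂ (S.map (u : H →ₗ[ℂ] H)) := by
  intro hfd
  have hinj : Function.Injective (u : H →ₗ[ℂ] H) := by
    intro a b hab
    have := congrArg (⇑(star u)) hab
    simpa [apply_star_apply hu.1] using this
  have e := Submodule.equivMapOfInjective (u : H →ₗ[ℂ] H) hinj S
  exact h (e.symm.finiteDimensional)

lemma conj_isProjInfInf {q₀ : H →L[ℂ] H} (hq₀ : IsProjInfInf q₀) {u : H →L[ℂ] H}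
    (hu : u ∈ unitary (H →L[ℂ] H)) : IsProjInfInf (u * q₀ * star u) := by
  obtain ⟨h1, h2, h3, h4⟩ := hq₀
  refine ⟨?_, ?_, ?_, ?_⟩
  · show (u * q₀ * star u) * (u * q₀ * star u) = u * q₀ * star u
    simp only [mul_assoc, lcancel hu.1]
    rw [← mul_assoc q₀ q₀, h1.eq]
  · show star (u * q₀ * star u) = u * q₀ * star u
    simp [star_mul, h2.star_eq, mul_assoc]
  · rw [range_conj u q₀ hu]; exact not_fd_map u hu _ h3
  · rw [ker_conj u q₀ hu]; exact not_fd_map u hu _ h4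

lemma comm_of_conj_eq {A B q : H →L[ℂ] H} (hA : A ∈ unitary (H →L[ℂ] H))
    (hB : B ∈ unitary (H →L[ℂ] H))
    (h : A * q * star A = B * q * star B) : (star A * B) * q = q * (star A * B) := by
  have h' := congrArg (fun x => star A * x) h
  simp only [← mul_assoc] at h'
  rw [hA.1, one_mul] at h'
  have h'' := congrArg (fun x => x * B) h'
  simp only [mul_assoc] at h''
  rw [hB.1, mul_one] at h''
  simp only [mul_assoc]
  exact h''.symm

lemma conj_conj (a b p : H →L[ℂ] H) :
    (a * b) * p * star (a * b) = a * (b * p * star b) * star a := by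
  simp [star_mul, mul_assoc]


def Tspace.toU (q₀ : H →L[ℂ] H) : Tspace q₀ → unitary (H →L[ℂ] H) := fun u => u

def Tspace.val (q₀ : H →L[ℂ] H) (u : Tspace q₀) : H →L[ℂ] H := (Tspace.toU q₀ u : H →L[ℂ] H)

lemma Tspace.val_mem (q₀ : H →L[ℂ] H) (u : Tspace q₀) :
    Tspace.val q₀ u ∈ unitary (H →L[ℂ] H) := SetLike.coe_mem (Tspace.toU q₀ u)

theorem statement13 (q₀ : H →L[ℂ] H) (hq₀ : IsProjInfInf q₀)
    [TopologicalSpace.SeparableSpace H] (hdimH : ¬ FiniteDimensional ℂ H)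
    (g : ProjStar H → (H →L[ℂ] H))
    (hgU : ∀ q, g q ∈ unitary (H →L[ℂ] H))
    (hgC : Continuous g)
    (hgP : ∀ q : ProjStar H, g q * q₀ * star (g q) = q.1) :
    ∃ hmem : ∀ (v : T0 q₀) (q : ProjStar H),
        g q * ((v.1 : unitary (H →L[ℂ] H)) : H →L[ℂ] H) ∈ unitary (H →L[ℂ] H),
      IsHomeomorph (fun z : T0 q₀ × ProjStar H =>
        Tspace.of q₀ (g z.2 * ((z.1.1 : unitary (H →L[ℂ] H)) : H →L[ℂ] H))
          (hmem z.1 z.2)) := by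
  have hmem : ∀ (v : T0 q₀) (q : ProjStar H),
      g q * ((v.1 : unitary (H →L[ℂ] H)) : H →L[ℂ] H) ∈ unitary (H →L[ℂ] H) :=
    fun v q => mul_mem (hgU q) (SetLike.coe_mem v.1)
  refine ⟨hmem, ?_⟩
  rw [isHomeomorph_iff_exists_inverse]
  -- notation
  set Φ : T0 q₀ × ProjStar H → Tspace q₀ := fun z =>
    Tspace.of q₀ (g z.2 * ((z.1.1 : unitary (H →L[ℂ] H)) : H →L[ℂ] H)) (hmem z.1 z.2) with hΦ
  -- key algebraic identity for the second coordinate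
  have key2 : ∀ z : T0 q₀ × ProjStar H,
      (g z.2 * ((z.1.1 : unitary (H →L[ℂ] H)) : H →L[ℂ] H)) * q₀ *
        star (g z.2 * ((z.1.1 : unitary (H →L[ℂ] H)) : H →L[ℂ] H)) = z.2.1 := by
    intro z
    set w : H →L[ℂ] H := ((z.1.1 : unitary (H →L[ℂ] H)) : H →L[ℂ] H) with hw
    have hwu : w ∈ unitary (H →L[ℂ] H) := SetLike.coe_mem z.1.1
    have hcomm : w * q₀ = q₀ * w := z.1.2
    have hwq : w * q₀ * star w = q₀ := by
      rw [hcomm, mul_assoc, hwu.2, mul_one]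
    rw [conj_conj, hwq, hgP]
  -- continuity of Φ
  have hΦc : Continuous Φ := by
    apply continuous_induced_rng.2
    show Continuous fun z : T0 q₀ × ProjStar H =>
      ((⇑(g z.2 * ((z.1.1 : unitary (H →L[ℂ] H)) : H →L[ℂ] H)) : H → H),
        ((g z.2 * ((z.1.1 : unitary (H →L[ℂ] H)) : H →L[ℂ] H)) * q₀ *
          star (g z.2 * ((z.1.1 : unitary (H →L[ℂ] H)) : H →L[ℂ] H)) : H →L[ℂ] H))
    have hT0 : Continuous fun v : T0 q₀ =>
        (⇑((v.1 : unitary (H →L[ℂ] H)) : H →L[ℂ] H) : H → H) := continuous_induced_dom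
    have hw : Continuous fun z : T0 q₀ × ProjStar H =>
        (⇑((z.1.1 : unitary (H →L[ℂ] H)) : H →L[ℂ] H) : H → H) :=
      hT0.comp continuous_fst
    refine Continuous.prodMk ?_ ?_
    · refine continuous_pi fun x => ?_
      have h1 : Continuous fun z : T0 q₀ × ProjStar H =>
          ((z.1.1 : unitary (H →L[ℂ] H)) : H →L[ℂ] H) x :=
        (continuous_apply x).comp hw
      have h2 : Continuous fun z : T0 q₀ × ProjStar H => g z.2 := hgC.comp continuous_snd
      have := isBoundedBilinearMap_apply.continuous.comp (h2.prodMk h1)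
      simpa [ContinuousLinearMap.mul_apply, Function.comp_def] using this
    · have : (fun z : T0 q₀ × ProjStar H =>
          ((g z.2 * ((z.1.1 : unitary (H →L[ℂ] H)) : H →L[ℂ] H)) * q₀ *
            star (g z.2 * ((z.1.1 : unitary (H →L[ℂ] H)) : H →L[ℂ] H)) : H →L[ℂ] H)) =
          fun z => z.2.1 := funext key2
      rw [this]
      exact continuous_subtype_val.comp continuous_snd
  -- the inverse map
  have hFc : Continuous fun u : Tspace q₀ =>
      ((⇑(Tspace.val q₀ u) : H → H),
        ((Tspace.val q₀ u) * q₀ *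
          star (Tspace.val q₀ u) : H →L[ℂ] H)) :=
    continuous_induced_dom
  set Q : Tspace q₀ → ProjStar H := fun u =>
    ⟨(Tspace.val q₀ u) * q₀ *
        star (Tspace.val q₀ u),
      conj_isProjInfInf hq₀ (Tspace.val_mem q₀ u)⟩ with hQdef
  have hQc : Continuous Q :=
    Continuous.subtype_mk (continuous_snd.comp hFc) _
  have hvmem : ∀ u : Tspace q₀,
      star (g (Q u)) * (Tspace.val q₀ u) ∈ unitary (H →L[ℂ] H) :=
    fun u => mul_mem (Unitary.star_mem (hgU (Q u))) (Tspace.val_mem q₀ u)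
  have hvcomm : ∀ u : Tspace q₀,
      (star (g (Q u)) * (Tspace.val q₀ u)) * q₀ =
        q₀ * (star (g (Q u)) * (Tspace.val q₀ u)) := by
    intro u
    refine comm_of_conj_eq (hgU (Q u)) (Tspace.val_mem q₀ u) ?_
    exact hgP (Q u)
  set Ψ : Tspace q₀ → T0 q₀ × ProjStar H := fun u =>
    (⟨⟨star (g (Q u)) * (Tspace.val q₀ u), hvmem u⟩, hvcomm u⟩, Q u)
    with hΨ
  refine ⟨hΦc, Ψ, ?_, ?_, ?_⟩
  · -- left inverse
    intro z
    have hQz : Q (Φ z) = z.2 := Subtype.ext (key2 z)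
    refine Prod.ext ?_ hQz
    apply Subtype.ext
    apply Subtype.ext
    show star (g (Q (Φ z))) *
        (g z.2 * ((z.1.1 : unitary (H →L[ℂ] H)) : H →L[ℂ] H)) =
      ((z.1.1 : unitary (H →L[ℂ] H)) : H →L[ℂ] H)
    rw [hQz, lcancel (hgU z.2).1]
  · -- right inverse
    intro u
    apply Subtype.ext
    show g (Q u) * (star (g (Q u)) * (Tspace.val q₀ u)) =
      (Tspace.val q₀ u)
    rw [lcancel' (hgU (Q u)).2]
  · -- continuity of Ψ
    refine Continuous.prodMk ?_ hQc
    apply continuous_induced_rng.2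
    show Continuous fun u : Tspace q₀ =>
      (⇑(star (g (Q u)) * (Tspace.val q₀ u)) : H → H)
    refine continuous_pi fun x => ?_
    have h1 : Continuous fun u : Tspace q₀ =>
        (Tspace.val q₀ u) x :=
      (continuous_apply x).comp (continuous_fst.comp hFc)
    have h2 : Continuous fun u : Tspace q₀ => star (g (Q u)) :=
      continuous_star.comp (hgC.comp hQc)
    have := isBoundedBilinearMap_apply.continuous.comp (h2.prodMk h1)
    simpa [ContinuousLinearMap.mul_apply, Function.comp_def] using this

end Paper
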